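/- Let σ_ω be a cyclic supercharacter modulo n, where ω is a unit modulo n with multiplicative order d > 1. If gcd(ω − 1, n) = 1, then the image of σ_ω is contained in H_d, the set of traces of matrices in the special unitary group SU_d(ℂ). -/

import Mathlib

open Finset Pointwise

/-- `e(θ) = exp(2πiθ)`. -/
noncomputable def e2 (θ : ℝ) : ℂ := Complex.exp (2 * Real.pi * Complex.I * θ)

/-- The cyclic supercharacter `σ_ω : ℤ/nℤ → ℂ` attached to a unit `ω` mod `n`:
`σ_ω(y) = ∑_{j=1}^{d} e(ω^j y / n)` where `d` is the multiplicative order of `ω`. -/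
noncomputable def cyclicSuperchar (n : ℕ) (ω : (ZMod n)ˣ) (y : ZMod n) : ℂ :=
  ∑ j ∈ Finset.Icc 1 (orderOf ω),
    e2 (((((ω ^ j : (ZMod n)ˣ) : ZMod n) * y).val : ℝ) / (n : ℝ))

/-- `H m`: the set of traces of matrices in `SU_m(ℂ)` (the filled `m`-cusped hypocycloid). -/
noncomputable def H (m : ℕ) : Set ℂ :=
  Set.range fun M : Matrix.specialUnitaryGroup (Fin m) ℂ =>
    Matrix.trace (M : Matrix (Fin m) (Fin m) ℂ)

/-- `P m`: the convex hull of `H m` (the filled regular `m`-gon). -/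
noncomputable def Pset (m : ℕ) : Set ℂ := convexHull ℝ (H m)

/-- `c_{j,k}` : the coefficient of `x^j` in the remainder of `x^k` mod `Φ_d(x)`. -/
noncomputable def cExp (d j k : ℕ) : ℤ :=
  (((Polynomial.X : Polynomial ℤ) ^ k) %ₘ Polynomial.cyclotomic d ℤ).coeff j

/-- The Laurent-polynomial map `g_d(z_1,…,z_{φ(d)}) = ∑_{k=1}^d ∏_j z_j^{c_{j,k}}`. -/
noncomputable def gphi (d : ℕ) (z : Fin (Nat.totient d) → ℂ) : ℂ :=
  ∑ k ∈ Finset.Icc 1 d, ∏ j : Fin (Nat.totient d), z j ^ (cExp d (j : ℕ) k)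

/-- The image of `g_d` restricted to the torus `𝕋^{φ(d)}`. -/
noncomputable def gImage (d : ℕ) : Set ℂ :=
  {w : ℂ | ∃ z : Fin (Nat.totient d) → ℂ, (∀ j, ‖z j‖ = 1) ∧ gphi d z = w}

/-- The `k`-fold Minkowski sum `A^{⊕k}` of a subset of `ℂ` with itself. -/
def minkSumPow (A : Set ℂ) (k : ℕ) : Set ℂ :=
  {z : ℂ | ∃ f : Fin k → ℂ, (∀ i, f i ∈ A) ∧ ∑ i, f i = z}

/-- Scaling a subset of `ℂ` by a real number. -/
def scale (r : ℝ) (A : Set ℂ) : Set ℂ := (fun z => (r : ℂ) * z) '' A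

/-- The sets `A k` fill out `B` as `k → ∞`. -/
def FillsOut (A : ℕ → Set ℂ) (B : Set ℂ) : Prop :=
  (∀ k, A k ⊆ B) ∧
    ∀ U : Set ℂ, IsOpen U → U.Nonempty → U ⊆ B → ∃ K : ℕ, ∀ k > K, (U ∩ A k).Nonempty

/-- A subset of `ℂ` has `k`-fold dihedral symmetry if it is stable under complex
conjugation and under rotation by `2π/k` about the origin. -/
def HasDihedralSymm (k : ℕ) (A : Set ℂ) : Prop :=
  (∀ z ∈ A, (starRingEnd ℂ) z ∈ A) ∧ ∀ z ∈ A, e2 (1 / k) * z ∈ A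

/-- The `k`-fold dihedral closure of a subset of `ℂ`. -/
def dihedralClosure (k : ℕ) (A : Set ℂ) : Set ℂ :=
  ⋂₀ {B : Set ℂ | A ⊆ B ∧ HasDihedralSymm k B}

/-- The Gauss sum `g_k(t) = ∑_{j=1}^{p} e(t j^k / p)` of order `k` mod `p`. -/
noncomputable def gaussG (p k : ℕ) (t : ZMod p) : ℂ :=
  ∑ j ∈ Finset.Icc 1 p, e2 ((((t * (j : ZMod p) ^ k).val : ℕ) : ℝ) / (p : ℝ))

/-- The Gauss sum `G(t,χ) = ∑_{j=1}^{p-1} χ(j) e(tj/p)` attached to a character `χ` mod `p`. -/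
noncomputable def GSum (p : ℕ) (χ : DirichletCharacter ℂ p) (t : ZMod p) : ℂ :=
  ∑ j ∈ Finset.Icc 1 (p - 1), χ (j : ZMod p) * e2 ((((t * (j : ZMod p)).val : ℕ) : ℝ) / (p : ℝ))

/-- For a cyclic supercharacter `σ_ω` mod `n` where `ω` has multiplicative
order `d > 1` and `gcd(ω - 1, n) = 1`, the image of `σ_ω` is contained in `H_d`. -/
lemma mem_H_of (d : ℕ) (l : Fin d → ℂ) (h1 : ∀ i, ‖l i‖ = 1) (hp : ∏ i, l i = 1) :
    (∑ i, l i) ∈ H d := by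
  have hmem : Matrix.diagonal l ∈ Matrix.specialUnitaryGroup (Fin d) ℂ := by
    rw [Matrix.mem_specialUnitaryGroup_iff]
    constructor
    · rw [Matrix.mem_unitaryGroup_iff]
      have : star (Matrix.diagonal l) = Matrix.diagonal (star l) := by
        simp [Matrix.star_eq_conjTranspose, Matrix.diagonal_conjTranspose]
      rw [this, Matrix.diagonal_mul_diagonal]
      have : (fun i => l i * (star l) i) = fun _ => (1 : ℂ) := by
        funext i
        have := Complex.mul_conj (l i)
        simp only [Pi.star_apply]
        rw [Complex.star_def, this, Complex.normSq_eq_norm_sq]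
        simp [h1 i]
      rw [this, Matrix.diagonal_one]
    · rw [Matrix.det_diagonal, hp]
  exact ⟨⟨Matrix.diagonal l, hmem⟩, by simp [Matrix.trace_diagonal]⟩

theorem stmt8 (n : ℕ) (hn : 0 < n) (ω : (ZMod n)ˣ) (hd : 1 < orderOf ω)
    (hcop : Nat.gcd (((ω : ZMod n) - 1).val) n = 1) :
    Set.range (cyclicSuperchar n ω) ⊆ H (orderOf ω) := by
  haveI : NeZero n := ⟨hn.ne'⟩
  set d := orderOf ω with hdd
  rintro w ⟨y, rfl⟩
  set u : ZMod n := (ω : ZMod n) with hu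
  -- basic facts
  have hud : u ^ d = 1 := by
    have := pow_orderOf_eq_one ω
    have := congrArg (Units.val) this
    rw [hu, ← Units.val_pow_eq_pow_val, this, Units.val_one]
  have hunit : IsUnit (u - 1) := by
    have h := (ZMod.isUnit_iff_coprime ((u - 1).val) n).mpr hcop
    rwa [ZMod.natCast_rightInverse (u - 1)] at h
  have hsum0 : ∑ i ∈ Finset.range d, u ^ i = 0 := by
    have hg := geom_sum_mul u d
    rw [hud, sub_self] at hg
    obtain ⟨v, hv⟩ := hunit
    have := congrArg (· * (↑v⁻¹ : ZMod n)) hg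
    simpa [← hv, mul_assoc] using this
  -- the eigenvalues
  set l : Fin d → ℂ := fun i =>
    e2 ((((u ^ ((i : ℕ) + 1) * y).val : ℕ) : ℝ) / (n : ℝ)) with hl
  have hsum : cyclicSuperchar n ω y = ∑ i, l i := by
    rw [cyclicSuperchar]
    rw [show Finset.Icc 1 d = Finset.Ico 1 (d + 1) by rw [Finset.Ico_add_one_right_eq_Icc],
      Finset.sum_Ico_eq_sum_range]
    simp only [Nat.add_sub_cancel]
    rw [← Fin.sum_univ_eq_sum_range]
    apply Finset.sum_congr rfl
    intro i _
    simp [hl, hu, add_comm 1 (i : ℕ), Units.val_pow_eq_pow_val]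
  rw [hsum]
  apply mem_H_of
  · intro i
    simp only [hl, e2]
    rw [Complex.norm_exp]
    have : (2 * (Real.pi:ℂ) * Complex.I * (((u ^ ((i:ℕ) + 1) * y).val : ℝ) / (n:ℝ) : ℝ)).re = 0 := by
      simp [Complex.mul_re, Complex.mul_im, Complex.I_re, Complex.I_im]
    rw [this, Real.exp_zero]
  · -- product is 1
    set S : ℕ := ∑ i : Fin d, (u ^ ((i : ℕ) + 1) * y).val with hS
    have hSmod : (S : ZMod n) = 0 := by
      rw [hS, Nat.cast_sum]
      have : ∀ i : Fin d, (((u ^ ((i : ℕ) + 1) * y).val : ℕ) : ZMod n)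
          = u ^ ((i : ℕ) + 1) * y := fun i => ZMod.natCast_rightInverse _
      rw [Finset.sum_congr rfl fun i _ => this i, ← Finset.sum_mul]
      have : ∑ i : Fin d, u ^ ((i : ℕ) + 1) = u * ∑ i ∈ Finset.range d, u ^ i := by
        rw [Finset.mul_sum, ← Fin.sum_univ_eq_sum_range (fun i => u * u ^ i)]
        exact Finset.sum_congr rfl fun i _ => by ring
      rw [this, hsum0, mul_zero, zero_mul]
    obtain ⟨m, hm⟩ := (ZMod.natCast_eq_zero_iff S n).mp hSmod
    have : ∏ i, l i = Complex.exp (2 * Real.pi * Complex.I * ((S : ℝ) / (n : ℝ))) := by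
      simp only [hl, e2, ← Complex.exp_sum]
      congr 1
      rw [← Finset.mul_sum]
      congr 1
      push_cast [hS]
      rw [Finset.sum_div]
    rw [this, hm]
    have hn' : (n : ℝ) ≠ 0 := Nat.cast_ne_zero.mpr hn.ne'
    have hq : (((n * m : ℕ) : ℝ) / (n : ℝ)) = (m : ℝ) := by push_cast; field_simp
    push_cast [hq] at *
    have hnc : (n : ℂ) ≠ 0 := Nat.cast_ne_zero.mpr hn.ne'
    rw [show ((n:ℂ) * m / (n:ℂ)) = (m:ℂ) by field_simp]
    rw [show 2 * (Real.pi : ℂ) * Complex.I * (m : ℂ) = (m : ℂ) * (2 * Real.pi * Complex.I) by ring]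
    exact Complex.exp_nat_mul_two_pi_mul_I m
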